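/- Let r < 4 and let c be a circular r-coloring of the all-negative cycle (C_n, −). Then c is a far-polar mapping of C_n: for each i, the points c(v_{i−1}) and c(v_{i+1}) partition the circle O_r into two parts of unequal length, and c(v_i) lies in the strictly larger part. -/

import Mathlib

open scoped Classical

/-- The representative in `[0, r)` of a point of the circle `O_r` (of circumference `r`),
i.e. the clockwise arc length from the base point `0`. -/
noncomputable def dlift (r : ℝ) (hr : 0 < r) (x : AddCircle r) : ℝ :=
  haveI : Fact (0 < r) := ⟨hr⟩
  ((AddCircle.equivIco r 0 x : Set.Ico (0 : ℝ) (0 + r)) : ℝ)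

/-- The representative in `(-r/2, r/2]` of a point of the circle `O_r`: the signed length of
the shortest arc from the base point (positive = clockwise). -/
noncomputable def slift (r : ℝ) (hr : 0 < r) (x : AddCircle r) : ℝ :=
  haveI : Fact (0 < r) := ⟨hr⟩
  ((AddCircle.equivIoc r (-(r / 2)) x : Set.Ioc (-(r / 2)) (-(r / 2) + r)) : ℝ)

/-- A mapping `c` of the vertices of the cycle `C_n` to the circle `O_r` is far-polar if for
each `i` the points `c (i-1)` and `c (i+1)` partition `O_r` into two arcs of unequal lengths
and `c i` lies strictly inside the larger arc.  Here `dlift r hr (c (i+1) - c (i-1))` is the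
length of the clockwise arc from `c (i-1)` to `c (i+1)`. -/
def FarPolarCycle (n : ℕ) (r : ℝ) (hr : 0 < r) (c : ZMod n → AddCircle r) : Prop :=
  ∀ i : ZMod n,
    dlift r hr (c (i + 1) - c (i - 1)) ≠ r / 2 ∧
    (if r / 2 < dlift r hr (c (i + 1) - c (i - 1)) then
      0 < dlift r hr (c i - c (i - 1)) ∧
        dlift r hr (c i - c (i - 1)) < dlift r hr (c (i + 1) - c (i - 1))
    else
      dlift r hr (c (i + 1) - c (i - 1)) < dlift r hr (c i - c (i - 1)))

lemma dlift_coe' (r : ℝ) (hr : 0 < r) (x : ℝ) :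
    dlift r hr (x : AddCircle r) = toIcoMod hr 0 x := rfl

lemma coe_dlift (r : ℝ) (hr : 0 < r) (x : AddCircle r) :
    ((dlift r hr x : ℝ) : AddCircle r) = x := by
  induction x using QuotientAddGroup.induction_on with
  | H y =>
    rw [dlift_coe']
    change QuotientAddGroup.mk _ = QuotientAddGroup.mk _
    rw [QuotientAddGroup.eq_iff_sub_mem, toIcoMod_sub_self]
    apply AddSubgroup.zsmul_mem_zmultiples

lemma dlift_mem (r : ℝ) (hr : 0 < r) (x : AddCircle r) :
    dlift r hr x ∈ Set.Ico (0 : ℝ) r := by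
  induction x using QuotientAddGroup.induction_on with
  | H y =>
    rw [show ((QuotientAddGroup.mk y : AddCircle r)) = (y : AddCircle r) from rfl, dlift_coe']
    exact ⟨(toIcoMod_mem_Ico hr 0 y).1, by simpa using (toIcoMod_mem_Ico hr 0 y).2⟩

lemma norm_le_dlift (r : ℝ) (hr : 0 < r) (x : AddCircle r) :
    ‖x‖ ≤ dlift r hr x := by
  have h0 := (dlift_mem r hr x).1
  have h := QuotientAddGroup.norm_mk_le_norm (S := AddSubgroup.zmultiples r) (m := dlift r hr x)
  rw [coe_dlift] at h
  simpa [Real.norm_eq_abs, abs_of_nonneg h0] using h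

lemma norm_le_sub_dlift (r : ℝ) (hr : 0 < r) (x : AddCircle r) :
    ‖x‖ ≤ r - dlift r hr x := by
  have h1 := (dlift_mem r hr x).2
  have h := QuotientAddGroup.norm_mk_le_norm (S := AddSubgroup.zmultiples r) (m := dlift r hr x - r)
  have e : ((dlift r hr x - r : ℝ) : AddCircle r) = x := by
    calc ((dlift r hr x - r : ℝ) : AddCircle r)
        = ((dlift r hr x - r + r : ℝ) : AddCircle r) :=
          (AddCircle.coe_add_period r (dlift r hr x - r)).symm
      _ = x := by rw [sub_add_cancel, coe_dlift]
  rw [e] at h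
  calc ‖x‖ ≤ ‖dlift r hr x - r‖ := h
    _ = r - dlift r hr x := by rw [Real.norm_eq_abs, abs_of_nonpos (by linarith)]; ring

/-- Any circular `r`-coloring, `r < 4`, of the all-negative cycle `(C_n, -)` is a far-polar
mapping of `C_n`. -/
theorem circColoring_farPolar (n : ℕ) (hn : 3 ≤ n) (r : ℝ) (hr : 0 < r) (hr4 : r < 4)
    (c : ZMod n → AddCircle r) (hc : ∀ i : ZMod n, 1 ≤ dist (c i) (c (i + 1))) :
    FarPolarCycle n r hr c := by
  intro i
  have key : ∀ j : ZMod n,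
      1 ≤ dlift r hr (c (j + 1) - c j) ∧ dlift r hr (c (j + 1) - c j) ≤ r - 1 := by
    intro j
    have h1 : (1 : ℝ) ≤ ‖c (j + 1) - c j‖ := by
      have := hc j
      rwa [dist_eq_norm, norm_sub_rev] at this
    refine ⟨h1.trans (norm_le_dlift r hr _), ?_⟩
    have := h1.trans (norm_le_sub_dlift r hr (c (j + 1) - c j))
    linarith
  have hA := key (i - 1)
  rw [sub_add_cancel] at hA
  have hB := key i
  set a := dlift r hr (c i - c (i - 1)) with ha
  set b := dlift r hr (c (i + 1) - c i) with hb
  have hr2 : (2 : ℝ) ≤ r := by linarith [hA.1, hA.2]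
  have hD : c (i + 1) - c (i - 1) = ((a + b : ℝ) : AddCircle r) := by
    rw [AddCircle.coe_add, ha, hb, coe_dlift, coe_dlift]
    abel
  rw [hD, dlift_coe']
  by_cases h : a + b < r
  · have hEq : toIcoMod hr 0 (a + b) = a + b :=
      (toIcoMod_eq_self hr).mpr ⟨by linarith [hA.1, hB.1], by rw [zero_add]; exact h⟩
    rw [hEq]
    have h2 : r / 2 < a + b := by linarith [hA.1, hB.1]
    refine ⟨by linarith, ?_⟩
    rw [if_pos h2]
    exact ⟨by linarith [hA.1], by linarith [hB.1]⟩
  · push_neg at h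
    have hEq : toIcoMod hr 0 (a + b) = a + b - r := by
      rw [← toIcoMod_sub hr]
      exact (toIcoMod_eq_self hr).mpr ⟨by linarith, by rw [zero_add]; linarith [hA.2, hB.2]⟩
    rw [hEq]
    have hlt : a + b - r < r / 2 := by linarith [hA.2, hB.2]
    refine ⟨ne_of_lt hlt, ?_⟩
    rw [if_neg (not_lt.mpr hlt.le)]
    linarith [hB.1]
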